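/- Let A ∈ ℝ^{n×n}, B ∈ ℝ^{n×m}, and let data matrices U_{0,1,T} ∈ ℝ^{m×T}, X_{0,T} ∈ ℝ^{n×T}, X_{1,T} ∈ ℝ^{n×T} satisfy the consistency relation X_{1,T} = B U_{0,1,T} + A X_{0,T}. Suppose the stacked matrix M = [U_{0,1,T}; X_{0,T}] ∈ ℝ^{(m+n)×T} has rank n+m, and let W ∈ ℝ^{T×(m+n)} be any right inverse of M (M W = I_{m+n}). Then for every u ∈ ℝ^m and every x ∈ ℝ^n, X_{1,T} · W · (u, x) = A x + B u, where (u,x) ∈ ℝ^{m+n} denotes the vector stacking u on top of x. In particular, the data-based map (u,x) ↦ X_{1,T} W (u,x) exactly reproduces the one-step state update of the system x(t+1) = A x(t) + B u(t). -/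

import Mathlib

open Matrix

/-- **Data-driven system representation.**
If the data are generated by `x(t+1) = A x(t) + B u(t)` (i.e. `X₁ = B U₀ + A X₀`),
the stacked matrix `M = [U₀; X₀]` has rank `n + m`, and `W` is a right inverse of
`M`, then for every input `u` and state `x` the data-based map reproduces the
one-step update: `X₁ W (u, x) = A x + B u`. -/
theorem stmt_2 (n m T : ℕ)
    (A : Matrix (Fin n) (Fin n) ℝ) (B : Matrix (Fin n) (Fin m) ℝ)
    (U0 : Matrix (Fin m) (Fin T) ℝ) (X0 X1 : Matrix (Fin n) (Fin T) ℝ)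
    (hdata : X1 = B * U0 + A * X0)
    (hrank : (Matrix.fromRows U0 X0).rank = n + m)
    (W : Matrix (Fin T) (Fin m ⊕ Fin n) ℝ)
    (hW : Matrix.fromRows U0 X0 * W = 1) :
    ∀ (u : Fin m → ℝ) (x : Fin n → ℝ),
      (X1 * W).mulVec (Sum.elim u x) = A.mulVec x + B.mulVec u := by
  intro u x
  have h1 : X1 = Matrix.fromCols B A * Matrix.fromRows U0 X0 := by
    rw [Matrix.fromCols_mul_fromRows, hdata]
  have h2 : X1 * W = Matrix.fromCols B A := by
    rw [h1, Matrix.mul_assoc, hW, Matrix.mul_one]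
  rw [h2, Matrix.fromCols_mulVec_sumElim]
  rw [add_comm]
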